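/- The union of an arbitrary family of MVE-algebras generates an MVE-algebra: if {Â_γ : γ ∈ Γ} is the collection of all MVE-algebras of a model, then σ(Â_γ : γ ∈ Γ) is the maximal MVE-algebra. -/

import Mathlib

open MeasureTheory ProbabilityTheory

/-- `χ` is a square-integrable unbiased estimator of zero for the family `P`. -/
def IsUEZero {𝓧 Θ : Type*} [MeasurableSpace 𝓧] (P : Θ → Measure 𝓧) (χ : 𝓧 → ℝ) : Prop :=
  Measurable χ ∧ (∀ θ, MemLp χ 2 (P θ)) ∧ ∀ θ, ∫ x, χ x ∂P θ = 0

/-- `g` is a UMVUE: minimal variance at every `θ` among all unbiased estimators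
(with finite second moments) of the same parametric function. -/
def IsUMVUE {𝓧 Θ : Type*} [MeasurableSpace 𝓧] (P : Θ → Measure 𝓧) (g : 𝓧 → ℝ) : Prop :=
  Measurable g ∧ (∀ θ, MemLp g 2 (P θ)) ∧
    ∀ g' : 𝓧 → ℝ, Measurable g' → (∀ θ, MemLp g' 2 (P θ)) →
      (∀ θ, ∫ x, g' x ∂P θ = ∫ x, g x ∂P θ) →
      ∀ θ, variance g (P θ) ≤ variance g' (P θ)

/-- A sub-σ-algebra `𝓐` of the basic σ-algebra `m` is an MVE-algebra for the family `P`
if every `𝓐`-measurable statistic with finite second moments under every `P θ`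
is a UMVUE of its expectation. -/
def IsMVEAlgebra {𝓧 Θ : Type*} [m : MeasurableSpace 𝓧] (P : Θ → Measure 𝓧)
    (𝓐 : MeasurableSpace 𝓧) : Prop :=
  𝓐 ≤ m ∧
    ∀ g : 𝓧 → ℝ, Measurable[𝓐] g → (∀ θ, MemLp g 2 (P θ)) → @IsUMVUE 𝓧 Θ m P g

section Aux

variable {𝓧 : Type*} {m : MeasurableSpace 𝓧} {μ : Measure 𝓧} [IsProbabilityMeasure μ]

lemma mul_integrable_of_memℒp_two {f g : 𝓧 → ℝ} (hf : MemLp f 2 μ) (hg : MemLp g 2 μ) :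
    Integrable (fun x => f x * g x) μ := by
  rw [← memLp_one_iff_integrable]
  have h : (1 : ENNReal) / 1 = 1 / 2 + 1 / 2 := by
    rw [ENNReal.div_add_div_same, one_div_one]
    norm_num
    exact (ENNReal.div_self (by norm_num) (by norm_num)).symm
  exact (hg.smul hf : MemLp (f • g) 1 μ)

lemma key_quadratic {c K : ℝ} (hK : 0 ≤ K) (h : ∀ t : ℝ, 0 ≤ 2 * t * c + t ^ 2 * K) :
    c = 0 := by
  have hK1 : (0:ℝ) < K + 1 := by linarith
  set t : ℝ := -(c / (K + 1)) with ht_def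
  have ht : t * (K + 1) = -c := by rw [ht_def]; field_simp
  have h3 : 0 ≤ (2 * t * c + t ^ 2 * K) * (K + 1) ^ 2 :=
    mul_nonneg (h t) (by positivity)
  have hid : (2 * t * c + t ^ 2 * K) * (K + 1) ^ 2 = -c ^ 2 * (K + 2) := by
    linear_combination (2 * c + K * t * (K + 1) + K * c) * ht
  have hc2 : c ^ 2 ≤ 0 := by nlinarith [h3, hid, hK]
  have : c ^ 2 = 0 := le_antisymm hc2 (sq_nonneg c)
  exact pow_eq_zero_iff (by norm_num) |>.mp this

end Aux


section Char

variable {𝓧 Θ : Type*} [m : MeasurableSpace 𝓧] {P : Θ → Measure 𝓧}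
  [∀ θ, IsProbabilityMeasure (P θ)]

lemma isUMVUE_iff_uncorr {g : 𝓧 → ℝ} (hgm : Measurable g) (hg2 : ∀ θ, MemLp g 2 (P θ)) :
    IsUMVUE P g ↔ ∀ χ, IsUEZero P χ → ∀ θ, ∫ x, g x * χ x ∂P θ = 0 := by
  constructor
  · rintro ⟨-, -, hmin⟩ χ ⟨hχm, hχ2, hχ0⟩ θ
    -- set up notation
    set c : ℝ := ∫ x, g x * χ x ∂P θ with hc
    set K : ℝ := ∫ x, χ x ^ 2 ∂P θ with hKdef
    have hK : 0 ≤ K := integral_nonneg fun x => sq_nonneg _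
    refine key_quadratic hK fun t => ?_
    have hm' : Measurable (fun x => g x + t * χ x) := hgm.add (hχm.const_mul t)
    have h2' : ∀ θ', MemLp (fun x => g x + t * χ x) 2 (P θ') :=
      fun θ' => (hg2 θ').add ((hχ2 θ').const_mul t)
    have hmean : ∀ θ', ∫ x, (g x + t * χ x) ∂P θ' = ∫ x, g x ∂P θ' := by
      intro θ'
      rw [integral_add ((hg2 θ').integrable one_le_two)
        (((hχ2 θ').integrable one_le_two).const_mul t), integral_const_mul, hχ0 θ']
      ring
    have key := hmin _ hm' h2' hmean θ
    have Ig2 : Integrable (fun x => g x ^ 2) (P θ) := (hg2 θ).integrable_sq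
    have Igχ : Integrable (fun x => g x * χ x) (P θ) :=
      mul_integrable_of_memℒp_two (hg2 θ) (hχ2 θ)
    have Iχ2 : Integrable (fun x => χ x ^ 2) (P θ) := (hχ2 θ).integrable_sq
    have hsq : ∫ x, (g x + t * χ x) ^ 2 ∂P θ
        = ∫ x, g x ^ 2 ∂P θ + (2 * t) * c + t ^ 2 * K := by
      have expand : ∀ x, (g x + t * χ x) ^ 2
          = g x ^ 2 + (2 * t) * (g x * χ x) + t ^ 2 * χ x ^ 2 := fun x => by ring
      simp_rw [expand]
      have I1 : Integrable (fun x => g x ^ 2 + 2 * t * (g x * χ x)) (P θ) :=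
        Ig2.add (Igχ.const_mul (2 * t))
      rw [integral_add I1 (Iχ2.const_mul (t ^ 2)),
        integral_add Ig2 (Igχ.const_mul (2 * t)), integral_const_mul, integral_const_mul]
    rw [variance_eq_sub (hg2 θ), variance_eq_sub (h2' θ)] at key
    simp only [Pi.pow_apply, hmean θ] at key
    rw [hsq] at key
    linarith [key]
  · rintro h
    refine ⟨hgm, hg2, fun g' hm' h2' hmean θ => ?_⟩
    set χ : 𝓧 → ℝ := fun x => g' x - g x with hχdef
    have hχ : IsUEZero P χ := by
      refine ⟨hm'.sub hgm, fun θ' => (h2' θ').sub (hg2 θ'), fun θ' => ?_⟩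
      rw [integral_sub ((h2' θ').integrable one_le_two) ((hg2 θ').integrable one_le_two),
        hmean θ', sub_self]
    have hc := h χ hχ θ
    have Ig2 : Integrable (fun x => g x ^ 2) (P θ) := (hg2 θ).integrable_sq
    have Igχ : Integrable (fun x => g x * χ x) (P θ) :=
      mul_integrable_of_memℒp_two (hg2 θ) (hχ.2.1 θ)
    have Iχ2 : Integrable (fun x => χ x ^ 2) (P θ) := (hχ.2.1 θ).integrable_sq
    have hsq : ∫ x, g' x ^ 2 ∂P θ
        = ∫ x, g x ^ 2 ∂P θ + 2 * (∫ x, g x * χ x ∂P θ) + ∫ x, χ x ^ 2 ∂P θ := by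
      have expand : ∀ x, g' x ^ 2 = g x ^ 2 + 2 * (g x * χ x) + χ x ^ 2 := fun x => by
        simp only [hχdef]; ring
      simp_rw [expand]
      have I1 : Integrable (fun x => g x ^ 2 + 2 * (g x * χ x)) (P θ) :=
        Ig2.add (Igχ.const_mul 2)
      rw [integral_add I1 Iχ2, integral_add Ig2 (Igχ.const_mul 2), integral_const_mul]
    have hχ2nn : 0 ≤ ∫ x, χ x ^ 2 ∂P θ := integral_nonneg fun x => sq_nonneg _
    rw [variance_eq_sub (hg2 θ), variance_eq_sub (h2' θ), hmean θ]
    simp only [Pi.pow_apply]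
    rw [hsq, hc]
    linarith

end Char

section Sigma

variable {𝓧 Θ : Type*} [m : MeasurableSpace 𝓧] (P : Θ → Measure 𝓧)
  [∀ θ, IsProbabilityMeasure (P θ)]

/-- The sets whose indicator is uncorrelated with every UE-zero under every `P θ`. -/
def mveSets : Set (Set 𝓧) :=
  {A | MeasurableSet A ∧ ∀ χ : 𝓧 → ℝ, IsUEZero P χ → ∀ θ, ∫ x in A, χ x ∂P θ = 0}

variable {P}

lemma mveSets_univ : Set.univ ∈ mveSets P := by
  refine ⟨MeasurableSet.univ, fun χ hχ θ => ?_⟩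
  rw [Measure.restrict_univ]; exact hχ.2.2 θ

lemma mveSets_compl {A : Set 𝓧} (hA : A ∈ mveSets P) : Aᶜ ∈ mveSets P := by
  refine ⟨hA.1.compl, fun χ hχ θ => ?_⟩
  have h := integral_add_compl hA.1 ((hχ.2.1 θ).integrable one_le_two)
  rw [hA.2 χ hχ θ, hχ.2.2 θ, zero_add] at h
  exact h

lemma mveSets_indicator_UEZero {A : Set 𝓧} (hA : A ∈ mveSets P) {χ : 𝓧 → ℝ}
    (hχ : IsUEZero P χ) : IsUEZero P (A.indicator χ) := by
  refine ⟨hχ.1.indicator hA.1, fun θ => MemLp.indicator hA.1 (hχ.2.1 θ), fun θ => ?_⟩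
  rw [integral_indicator hA.1]
  exact hA.2 χ hχ θ

lemma mveSets_inter {A B : Set 𝓧} (hA : A ∈ mveSets P) (hB : B ∈ mveSets P) :
    A ∩ B ∈ mveSets P := by
  refine ⟨hA.1.inter hB.1, fun χ hχ θ => ?_⟩
  have h := hB.2 _ (mveSets_indicator_UEZero hA hχ) θ
  rwa [setIntegral_indicator hA.1, Set.inter_comm] at h

lemma mveSets_union {A B : Set 𝓧} (hA : A ∈ mveSets P) (hB : B ∈ mveSets P) :
    A ∪ B ∈ mveSets P := by
  have := mveSets_compl (mveSets_inter (mveSets_compl hA) (mveSets_compl hB))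
  rwa [Set.compl_inter, compl_compl, compl_compl] at this

lemma mveSets_iUnion {A : ℕ → Set 𝓧} (hA : ∀ n, A n ∈ mveSets P) :
    (⋃ n, A n) ∈ mveSets P := by
  set S : ℕ → Set 𝓧 := fun n => ⋃ i ∈ Finset.range (n + 1), A i with hS
  have hSmem : ∀ n, S n ∈ mveSets P := by
    intro n
    induction n with
    | zero => simpa [hS] using hA 0
    | succ k ih =>
        have : S (k + 1) = S k ∪ A (k + 1) := by
          simp only [hS, Finset.range_add_one (n := k + 1)]
          rw [Finset.set_biUnion_insert, Set.union_comm]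
        rw [this]
        exact mveSets_union ih (hA (k + 1))
  have hSmono : Monotone S := by
    intro a b hab
    refine Set.biUnion_subset_biUnion_left ?_
    intro i hi
    have : i < a + 1 := Finset.mem_range.mp hi
    exact Finset.mem_coe.mpr (Finset.mem_range.mpr (by omega))
  have hUnion : (⋃ n, S n) = ⋃ n, A n := by
    apply Set.Subset.antisymm
    · exact Set.iUnion_subset fun n => Set.iUnion₂_subset fun i _ => Set.subset_iUnion A i
    · exact Set.iUnion_subset fun n =>
        Set.subset_iUnion_of_subset n <|
          Set.subset_biUnion_of_mem (by simp : n ∈ Finset.range (n + 1))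
  refine ⟨by rw [← hUnion]; exact MeasurableSet.iUnion fun n => (hSmem n).1, fun χ hχ θ => ?_⟩
  have hint : Integrable χ (P θ) := (hχ.2.1 θ).integrable one_le_two
  have htend := tendsto_setIntegral_of_monotone (fun n => (hSmem n).1) hSmono
    (hint.integrableOn (s := ⋃ n, S n))
  have hzero : ∀ n, ∫ x in S n, χ x ∂P θ = 0 := fun n => (hSmem n).2 χ hχ θ
  simp only [hzero] at htend
  have := tendsto_nhds_unique htend tendsto_const_nhds
  rw [← hUnion]
  exact this

/-- The σ-algebra of all mve sets. -/
def mveSigma : MeasurableSpace 𝓧 where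
  MeasurableSet' A := A ∈ mveSets P
  measurableSet_empty := by
    have := mveSets_compl (P := P) mveSets_univ
    rwa [Set.compl_univ] at this
  measurableSet_compl _ h := mveSets_compl h
  measurableSet_iUnion _ h := mveSets_iUnion h

lemma mveSigma_le : (mveSigma (P := P)) ≤ m := fun _A hA => hA.1

end Sigma

section Main

variable {𝓧 Θ : Type*} [m : MeasurableSpace 𝓧] {P : Θ → Measure 𝓧}
  [∀ θ, IsProbabilityMeasure (P θ)]

lemma simpleFunc_mul_integrable {χ : 𝓧 → ℝ} (hχ : IsUEZero P χ) (θ : Θ)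
    (s : @SimpleFunc 𝓧 (mveSigma (P := P)) ℝ) :
    Integrable (fun x => s x * χ x) (P θ) := by
  obtain ⟨C, hC⟩ := @SimpleFunc.exists_forall_norm_le 𝓧 ℝ (mveSigma (P := P)) _ s
  refine Integrable.bdd_mul ((hχ.2.1 θ).integrable one_le_two) ?_ (ae_of_all _ hC)
  have h1 := @SimpleFunc.measurable 𝓧 ℝ (mveSigma (P := P)) _ s
  exact (h1.mono (mveSigma_le (P := P)) le_rfl).aestronglyMeasurable

lemma simpleFunc_mul_integral_zero {χ : 𝓧 → ℝ} (hχ : IsUEZero P χ) (θ : Θ)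
    (s : @SimpleFunc 𝓧 (mveSigma (P := P)) ℝ) :
    ∫ x, s x * χ x ∂P θ = 0 := by
  refine @SimpleFunc.induction 𝓧 ℝ (mveSigma (P := P)) _
    (fun s => ∫ x, s x * χ x ∂P θ = 0) ?_ ?_ s
  · intro c A hA
    have hA' : A ∈ mveSets P := hA
    simp only [SimpleFunc.coe_piecewise, SimpleFunc.coe_const, Function.const_zero,
      Set.piecewise_eq_indicator]
    have hfun : ∀ x, (A.indicator (Function.const 𝓧 c)) x * χ x
        = A.indicator (fun y => c * χ y) x := by
      intro x
      by_cases hx : x ∈ A <;>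
        simp [Set.indicator_of_mem, Set.indicator_of_notMem, hx]
    simp_rw [hfun]
    rw [integral_indicator hA'.1, integral_const_mul, hA'.2 χ hχ θ, mul_zero]
  · intro f₁ f₂ _ h1 h2
    have hfun : ∀ x, (f₁ + f₂) x * χ x = f₁ x * χ x + f₂ x * χ x := by
      intro x
      rw [show ((f₁ + f₂) x : ℝ) = f₁ x + f₂ x from rfl, add_mul]
    simp_rw [hfun]
    rw [integral_add (simpleFunc_mul_integrable hχ θ f₁) (simpleFunc_mul_integrable hχ θ f₂),
      h1, h2, add_zero]

lemma mveSigma_integral_mul_zero {g χ : 𝓧 → ℝ}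
    (hg : Measurable[mveSigma (P := P)] g) (hg2 : ∀ θ, MemLp g 2 (P θ))
    (hχ : IsUEZero P χ) (θ : Θ) : ∫ x, g x * χ x ∂P θ = 0 := by
  set s : ℕ → @SimpleFunc 𝓧 (mveSigma (P := P)) ℝ := fun n =>
    @SimpleFunc.approxOn ℝ 𝓧 _ _ _ (mveSigma (P := P)) g hg Set.univ 0 (Set.mem_univ 0) _ n
    with hs
  have hbound : Integrable (fun x => (‖g x‖ + ‖g x‖) * ‖χ x‖) (P θ) :=
    mul_integrable_of_memℒp_two ((hg2 θ).norm.add (hg2 θ).norm) (hχ.2.1 θ).norm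
  have hFint : ∀ n : ℕ, Integrable (fun x => (s n) x * χ x) (P θ) :=
    fun n => simpleFunc_mul_integrable hχ θ (s n)
  have hmeas : ∀ n : ℕ, AEStronglyMeasurable (fun x => (s n) x * χ x) (P θ) :=
    fun n => (hFint n).aestronglyMeasurable
  have hle : ∀ n : ℕ, ∀ᵐ x ∂P θ, ‖(s n) x * χ x‖ ≤ (‖g x‖ + ‖g x‖) * ‖χ x‖ := by
    intro n
    refine Filter.Eventually.of_forall fun x => ?_
    rw [norm_mul]
    gcongr
    exact @SimpleFunc.norm_approxOn_zero_le 𝓧 ℝ (mveSigma (P := P)) _ _ _ g hg Set.univ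
      (Set.mem_univ 0) _ x n
  have hlim : ∀ᵐ x ∂P θ, Filter.Tendsto (fun n => (s n) x * χ x) Filter.atTop
      (nhds (g x * χ x)) := by
    refine Filter.Eventually.of_forall fun x => ?_
    exact (@SimpleFunc.tendsto_approxOn ℝ 𝓧 _ _ _ (mveSigma (P := P)) g hg Set.univ 0
      (Set.mem_univ 0) _ x (by simp)).mul_const (χ x)
  have htend := tendsto_integral_of_dominated_convergence _ hmeas hbound hle hlim
  have hzero : ∀ n : ℕ, ∫ x, (s n) x * χ x ∂P θ = 0 :=
    fun n => simpleFunc_mul_integral_zero hχ θ (s n)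
  simp only [hzero] at htend
  exact tendsto_nhds_unique htend tendsto_const_nhds

lemma isMVEAlgebra_mveSigma : @IsMVEAlgebra 𝓧 Θ m P (mveSigma (P := P)) := by
  refine ⟨mveSigma_le, fun g hg hg2 => ?_⟩
  have hgm : Measurable[m] g := hg.mono (mveSigma_le (P := P)) le_rfl
  rw [isUMVUE_iff_uncorr hgm hg2]
  exact fun χ hχ θ => mveSigma_integral_mul_zero hg hg2 hχ θ

lemma isMVEAlgebra_mono {𝓐 𝓑 : MeasurableSpace 𝓧} (h : 𝓐 ≤ 𝓑)
    (h𝓑 : @IsMVEAlgebra 𝓧 Θ m P 𝓑) : @IsMVEAlgebra 𝓧 Θ m P 𝓐 :=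
  ⟨h.trans h𝓑.1, fun g hg hg2 => h𝓑.2 g (hg.mono h le_rfl) hg2⟩

lemma mem_mveSets_of_isUMVUE {A : Set 𝓧} (hAm : MeasurableSet[m] A)
    (hU : @IsUMVUE 𝓧 Θ m P (A.indicator (fun _ => (1 : ℝ))))
    (hInd2 : ∀ θ, MemLp (A.indicator (fun _ => (1 : ℝ))) 2 (P θ)) :
    A ∈ mveSets P := by
  have hIndm : Measurable[m] (A.indicator (fun _ => (1 : ℝ))) :=
    measurable_const.indicator hAm
  have huncorr := (isUMVUE_iff_uncorr (m := m) hIndm hInd2).mp hU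
  refine ⟨hAm, fun χ hχ θ => ?_⟩
  have h0 := huncorr χ hχ θ
  have hfun : ∀ x, A.indicator (fun _ => (1 : ℝ)) x * χ x = A.indicator χ x := by
    intro x
    by_cases hx : x ∈ A <;>
      simp [Set.indicator_of_mem, Set.indicator_of_notMem, hx]
  simp_rw [hfun] at h0
  rwa [integral_indicator hAm] at h0

lemma memℒp_indicator_one {A : Set 𝓧} (hAm : MeasurableSet[m] A) :
    ∀ θ, MemLp (A.indicator (fun _ => (1 : ℝ))) 2 (P θ) := fun _ =>
  MemLp.indicator hAm (memLp_const 1)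

lemma le_mveSigma_of_isMVEAlgebra {𝓐 : MeasurableSpace 𝓧}
    (h𝓐 : @IsMVEAlgebra 𝓧 Θ m P 𝓐) : 𝓐 ≤ mveSigma (m := m) (P := P) := by
  intro A hA
  have hAm : MeasurableSet[m] A := h𝓐.1 A hA
  have hInd : Measurable[𝓐] (A.indicator (fun _ => (1 : ℝ))) :=
    measurable_const.indicator hA
  have hInd2 := memℒp_indicator_one (m := m) (P := P) hAm
  have hU := h𝓐.2 _ hInd hInd2
  exact mem_mveSets_of_isUMVUE (m := m) hAm hU hInd2

end Main


theorem stmt19 {𝓧 Θ : Type*} [m : MeasurableSpace 𝓧]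
    (P : Θ → Measure 𝓧) [∀ θ, IsProbabilityMeasure (P θ)] :
    @IsMVEAlgebra 𝓧 Θ m P (sSup {𝓐 : MeasurableSpace 𝓧 | @IsMVEAlgebra 𝓧 Θ m P 𝓐}) ∧
    ∀ 𝓑 : MeasurableSpace 𝓧, @IsMVEAlgebra 𝓧 Θ m P 𝓑 →
      𝓑 ≤ sSup {𝓐 : MeasurableSpace 𝓧 | @IsMVEAlgebra 𝓧 Θ m P 𝓐} := by
  refine ⟨?_, fun 𝓑 h𝓑 => le_sSup h𝓑⟩
  refine isMVEAlgebra_mono (m := m) ?_ (isMVEAlgebra_mveSigma (m := m) (P := P))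
  exact sSup_le fun 𝓐 h𝓐 => le_mveSigma_of_isMVEAlgebra (m := m) h𝓐
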